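/- If a discriminatory equilibrium and a uniform advertising equilibrium B coexist at the same q, ex-ante consumer welfare is weakly higher under the discriminatory equilibrium: ∫_{v*(q)}^1 (v - v*(q)) f(v) dv + (1-q)δ ≥ ∫_{p_M}^1 (v - p_M) f(v) dv. -/
import Mathlib


/-- If a discriminatory equilibrium and a uniform advertising equilibrium B coexist
at the same `q`, ex-ante consumer welfare is weakly higher under the discriminatory
equilibrium: `∫_{v*}^1 (v - v*) f + (1-q)δ ≥ ∫_{p_M}^1 (v - p_M) f`, using
`v* ≤ p_M` and `(1-q)δ ≥ 0`. -/
theorem coexist_B_welfare (δ q pM vs : ℝ) (f : ℝ → ℝ)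
    (hδ : 0 < δ) (hq : q ∈ Set.Icc (1/2 : ℝ) 1)
    (hf_nonneg : ∀ v ∈ Set.Icc (0:ℝ) 1, 0 ≤ f v)
    (hf_int : IntervalIntegrable f MeasureTheory.volume 0 1)
    (h0vs : 0 ≤ vs) (hvspM : vs ≤ pM) (hpM1 : pM ≤ 1) :
    (∫ v in vs..(1:ℝ), (v - vs) * f v) + (1 - q) * δ ≥
      ∫ v in pM..(1:ℝ), (v - pM) * f v := by
  have hvs1 : vs ≤ 1 := hvspM.trans hpM1
  have h0pM : 0 ≤ pM := h0vs.trans hvspM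
  have hint : ∀ c a b : ℝ, 0 ≤ a → a ≤ 1 → 0 ≤ b → b ≤ 1 →
      IntervalIntegrable (fun v => (v - c) * f v) MeasureTheory.volume a b := by
    intro c a b h1 h2 h3 h4
    refine (hf_int.mono_set ?_).continuousOn_mul (by fun_prop)
    rw [Set.uIcc_of_le (zero_le_one : (0:ℝ) ≤ 1)]
    exact Set.uIcc_subset_Icc ⟨h1, h2⟩ ⟨h3, h4⟩
  have key : (∫ v in pM..(1:ℝ), (v - pM) * f v) ≤ ∫ v in vs..(1:ℝ), (v - vs) * f v := by
    have hsplit : (∫ v in vs..(1:ℝ), (v - vs) * f v) =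
        (∫ v in vs..pM, (v - vs) * f v) + ∫ v in pM..(1:ℝ), (v - vs) * f v :=
      (intervalIntegral.integral_add_adjacent_intervals
        (hint vs vs pM h0vs hvs1 h0pM hpM1) (hint vs pM 1 h0pM hpM1 zero_le_one le_rfl)).symm
    have h1 : (0:ℝ) ≤ ∫ v in vs..pM, (v - vs) * f v := by
      apply intervalIntegral.integral_nonneg hvspM
      intro u hu
      exact mul_nonneg (by linarith [hu.1]) (hf_nonneg u ⟨h0vs.trans hu.1, hu.2.trans hpM1⟩)
    have h2 : (∫ v in pM..(1:ℝ), (v - pM) * f v) ≤ ∫ v in pM..(1:ℝ), (v - vs) * f v := by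
      apply intervalIntegral.integral_mono_on hpM1
        (hint pM pM 1 h0pM hpM1 zero_le_one le_rfl)
        (hint vs pM 1 h0pM hpM1 zero_le_one le_rfl)
      intro u hu
      have := hf_nonneg u ⟨h0pM.trans hu.1, hu.2⟩
      nlinarith
    linarith
  have : 0 ≤ (1 - q) * δ := mul_nonneg (by linarith [hq.2]) hδ.le
  linarith
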